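/- Let V be an isometry on a complex Hilbert space H and let w ∈ ℂ with ‖w‖ < 1. Let D be the inverse of the unit 1 − (conj w)•V, set C := Real.sqrt(1 − |w|²) • D and V_w := (V − w•1) * D. Then: (a) for every x ∈ H with V* x = 0 one has ‖C x‖ = ‖x‖ and V_w* (C x) = 0; (b) conversely, for every z ∈ H with V_w* z = 0 there exists x ∈ H with V* x = 0 and C x = z. In particular, C restricts to an isometric bijection from ker V* onto ker V_w*. -/

import Mathlib

noncomputable section

open scoped ComplexConjugate
open ContinuousLinearMap

/-- **The Crofoot transform is an isometric bijection between the defect spaces.**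
Let `V` be an isometry on a complex Hilbert space `H`, `‖w‖ < 1`, and let `D` be the
inverse of the unit `1 - (conj w)•V`.  Set `C := √(1 - |w|²) • D` and
`V_w := (V - w•1) * D`.  Then `C` maps `ker V*` isometrically onto `ker V_w*`. -/
theorem crofoot_transform {H : Type*} [NormedAddCommGroup H]
    [InnerProductSpace ℂ H] [CompleteSpace H]
    (V : H →L[ℂ] H) (hV : ∀ x, ‖V x‖ = ‖x‖) (w : ℂ) (hw : ‖w‖ < 1)
    (D : H →L[ℂ] H)
    (hD₁ : (1 - (conj w) • V) * D = 1) (hD₂ : D * (1 - (conj w) • V) = 1)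
    (C : H →L[ℂ] H) (hC : C = ((Real.sqrt (1 - ‖w‖ ^ 2) : ℝ) : ℂ) • D)
    (Vw : H →L[ℂ] H) (hVw : Vw = (V - w • (1 : H →L[ℂ] H)) * D) :
    (∀ x : H, adjoint V x = 0 → ‖C x‖ = ‖x‖ ∧ adjoint Vw (C x) = 0) ∧
      (∀ z : H, adjoint Vw z = 0 → ∃ x : H, adjoint V x = 0 ∧ C x = z) := by
  set s : ℝ := Real.sqrt (1 - ‖w‖ ^ 2) with hs
  have hw2 : 0 < 1 - ‖w‖ ^ 2 := by nlinarith [norm_nonneg w]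
  have hspos : 0 < s := Real.sqrt_pos.mpr hw2
  have hssq : s ^ 2 = 1 - ‖w‖ ^ 2 := Real.sq_sqrt hw2.le
  -- V* V = 1
  have hVV : ∀ y : H, adjoint V (V y) = y := by
    intro y
    apply ext_inner_left ℂ
    intro x
    rw [adjoint_inner_right]
    exact (⟨V.toLinearMap, hV⟩ : H →ₗᵢ[ℂ] H).inner_map_map x y
  -- adjoint of Vw
  have hAdjVw : ∀ u : H, adjoint Vw u = adjoint D (adjoint V u - conj w • u) := by
    intro u
    rw [hVw, ← star_eq_adjoint, star_mul]
    simp only [ContinuousLinearMap.mul_apply, star_sub, star_smul, star_one,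
      star_eq_adjoint, sub_apply, smul_apply, one_apply]
    rfl
  constructor
  · intro x hx
    set y : H := D x with hy
    have hxy : x = y - conj w • V y := by
      have := congrArg (fun T => T x) hD₁
      simpa [ContinuousLinearMap.mul_apply, sub_apply, smul_apply] using this.symm
    have hVy : adjoint V y = conj w • y := by
      have h0 : adjoint V x = adjoint V y - conj w • y := by
        rw [hxy]
        simp [map_sub, map_smul, hVV]
      rw [hx] at h0
      exact sub_eq_zero.mp h0.symm
    have hre : RCLike.re (inner ℂ y (conj w • V y) : ℂ) = ‖w‖ ^ 2 * ‖y‖ ^ 2 := by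
      rw [inner_smul_right, ← adjoint_inner_left, hVy, inner_smul_left,
        inner_self_eq_norm_sq_to_K, Complex.conj_conj, ← mul_assoc, RCLike.conj_mul]
      norm_cast
    have hns := @norm_sub_sq ℂ _ _ _ _ y (conj w • V y)
    rw [hre, ← hxy] at hns
    have hVyn : ‖conj w • V y‖ = ‖w‖ * ‖y‖ := by simp [norm_smul, hV]
    rw [hVyn] at hns
    have hnx : ‖x‖ ^ 2 = (s * ‖y‖) ^ 2 := by nlinarith [hns, hssq]
    have hCx : ‖C x‖ = s * ‖y‖ := by
      rw [hC]
      simp [norm_smul, abs_of_pos hspos, ← hy]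
    constructor
    · rw [hCx]
      nlinarith [norm_nonneg x, mul_nonneg hspos.le (norm_nonneg y)]
    · rw [hC]
      simp only [smul_apply, map_smul]
      rw [hAdjVw, ← hy, hVy]
      simp
  · intro z hz
    have h1 : adjoint D (adjoint V z - conj w • z) = 0 := by
      rw [← hAdjVw, hz]
    have hVz : adjoint V z = conj w • z := by
      have h2 : star (1 - (conj w) • V) * star D = 1 := by
        rw [← star_mul, hD₂, star_one]
      have h3 := congrArg (fun T => T (adjoint V z - conj w • z)) h2
      simp only [ContinuousLinearMap.mul_apply, star_eq_adjoint, h1, map_zero,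
        one_apply] at h3
      exact sub_eq_zero.mp h3.symm
    refine ⟨((s : ℂ))⁻¹ • (z - conj w • V z), ?_, ?_⟩
    · rw [map_smul, map_sub, map_smul, hVV, hVz]
      simp
    · rw [hC]
      have hz' : D (z - conj w • V z) = z := by
        have := congrArg (fun T => T z) hD₂
        simpa [ContinuousLinearMap.mul_apply, sub_apply, smul_apply] using this
      simp only [smul_apply, map_smul, hz', smul_smul]
      rw [inv_mul_cancel₀ (by exact_mod_cast hspos.ne' : (s : ℂ) ≠ 0)]
      simp
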